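/- arXiv:1705.00988 — 5 statements merged into one kernel-verified Lean document; each statement's English description precedes it below -/
import Mathlib

section
/- Let 0 < β ≤ 1 and B ∈ ℝ. Then m = 0 is the unique real solution of the fixed-point equation m = (1/2)·(tanh(β(m+B)) + tanh(β(m−B))). -/
/-- `x * cosh x - sinh x` is positive for positive `x`. -/
lemma aux_sinh_lt_mul_cosh {x : ℝ} (hx : 0 < x) : Real.sinh x < x * Real.cosh x := by
  have h : StrictMonoOn (fun y : ℝ => y * Real.cosh y - Real.sinh y) (Set.Ici 0) := by
    apply strictMonoOn_of_deriv_pos (convex_Ici _)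
    · exact ((continuous_id.mul Real.continuous_cosh).sub Real.continuous_sinh).continuousOn
    · intro y hy
      rw [interior_Ici, Set.mem_Ioi] at hy
      have : HasDerivAt (fun y : ℝ => y * Real.cosh y - Real.sinh y)
          (1 * Real.cosh y + y * Real.sinh y - Real.cosh y) y :=
        ((hasDerivAt_id y).mul (Real.hasDerivAt_cosh y)).sub (Real.hasDerivAt_sinh y)
      rw [this.deriv]
      have := Real.sinh_pos_iff.mpr hy
      nlinarith
  have := h (Set.self_mem_Ici) (Set.mem_Ici.mpr hx.le) hx
  simp at this
  linarith

/-- `tanh x < x` for positive `x`. -/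
lemma aux_tanh_lt {x : ℝ} (hx : 0 < x) : Real.tanh x < x := by
  rw [Real.tanh_eq_sinh_div_cosh, div_lt_iff₀ (Real.cosh_pos _)]
  exact aux_sinh_lt_mul_cosh hx

/-- addition formula consequence: `tanh u + tanh v = sinh (u+v) / (cosh u * cosh v)`. -/
lemma aux_tanh_add (u v : ℝ) :
    Real.tanh u + Real.tanh v = Real.sinh (u + v) / (Real.cosh u * Real.cosh v) := by
  rw [Real.tanh_eq_sinh_div_cosh, Real.tanh_eq_sinh_div_cosh, Real.sinh_add]
  field_simp

lemma aux_key (β B m : ℝ) (hβ0 : 0 < β) (hβ1 : β ≤ 1) (hm : 0 < m) :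
    (1 / 2) * (Real.tanh (β * (m + B)) + Real.tanh (β * (m - B))) < m := by
  set u := β * (m + B)
  set v := β * (m - B)
  have huv : u + v = 2 * (β * m) := by simp only [u, v]; ring
  have hx : 0 < β * m := mul_pos hβ0 hm
  have hs : 0 < Real.sinh (u + v) := by rw [huv]; exact Real.sinh_pos_iff.mpr (by linarith)
  have hc : (Real.cosh (u + v) + 1) / 2 ≤ Real.cosh u * Real.cosh v := by
    have h1 : Real.cosh (u + v) + Real.cosh (u - v) = 2 * (Real.cosh u * Real.cosh v) := by
      rw [Real.cosh_add, Real.cosh_sub]; ring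
    have h2 : (1 : ℝ) ≤ Real.cosh (u - v) := Real.one_le_cosh _
    linarith
  have hcpos : 0 < (Real.cosh (u + v) + 1) / 2 := by
    have := Real.cosh_pos (x := u + v); linarith
  have hstep : Real.tanh u + Real.tanh v ≤ Real.sinh (u + v) / ((Real.cosh (u + v) + 1) / 2) := by
    rw [aux_tanh_add]
    exact div_le_div_of_nonneg_left hs.le hcpos hc
  have htanh : Real.sinh (u + v) / ((Real.cosh (u + v) + 1) / 2) = 2 * Real.tanh (β * m) := by
    rw [huv, Real.sinh_two_mul, Real.cosh_two_mul, Real.tanh_eq_sinh_div_cosh]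
    have h1 := Real.cosh_pos (x := β * m)
    have h2 : Real.cosh (β * m) ^ 2 = 1 + Real.sinh (β * m) ^ 2 := by
      have := Real.cosh_sq_sub_sinh_sq (β * m); nlinarith
    field_simp
    linear_combination h2
  have h3 : Real.tanh (β * m) < β * m := aux_tanh_lt hx
  have h4 : β * m ≤ m := by nlinarith
  linarith [hstep, htanh ▸ hstep]

/-- For `0 < β ≤ 1` and any real `B`, `m = 0` is the unique real
solution of the stationarity equation
`m = (1/2) * (tanh (β*(m+B)) + tanh (β*(m-B)))`
of the random field Curie–Weiss model. -/
theorem rfcw_paramagnetic_unique_solution (β B : ℝ) (hβ0 : 0 < β) (hβ1 : β ≤ 1) :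
    ∀ m : ℝ,
      m = (1 / 2) * (Real.tanh (β * (m + B)) + Real.tanh (β * (m - B))) ↔ m = 0 := by
  intro m
  constructor
  · intro h
    by_contra hm
    rcases lt_or_gt_of_ne hm with hneg | hpos
    · -- apply aux_key to -m
      have hkey := aux_key β B (-m) hβ0 hβ1 (by linarith)
      have h1 : β * (-m + B) = -(β * (m - B)) := by ring
      have h2 : β * (-m - B) = -(β * (m + B)) := by ring
      rw [h1, h2, Real.tanh_neg, Real.tanh_neg] at hkey
      linarith
    · have hkey := aux_key β B m hβ0 hβ1 hpos
      linarith
  · intro h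
    subst h
    have h1 : β * (0 - B) = -(β * (0 + B)) := by ring
    rw [h1, Real.tanh_neg]
    ring
end

section
/- Let β > 1 and B ≥ 0 satisfy cosh²(βB) < β. Then there exists m > 0 with m = (1/2)·(tanh(β(m+B)) + tanh(β(m−B))); consequently (by oddness of the right-hand side in m) −m is also a solution, so the fixed-point equation has at least two nonzero (ferromagnetic) solutions. -/
lemma my_tanh_lt_one (x : ℝ) : Real.tanh x < 1 := by
  rw [Real.tanh_eq_sinh_div_cosh, div_lt_one (Real.cosh_pos x)]
  exact Real.sinh_lt_cosh x

lemma my_continuous_tanh : Continuous Real.tanh := by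
  have : Continuous fun x => Real.sinh x / Real.cosh x :=
    Real.continuous_sinh.div Real.continuous_cosh fun x => (Real.cosh_pos x).ne'
  exact this.congr fun y => (Real.tanh_eq_sinh_div_cosh y).symm

lemma my_hasDerivAt_tanh (x : ℝ) : HasDerivAt Real.tanh (1 / Real.cosh x ^ 2) x := by
  have h : HasDerivAt (fun y => Real.sinh y / Real.cosh y)
      ((Real.cosh x * Real.cosh x - Real.sinh x * Real.sinh x) / Real.cosh x ^ 2) x :=
    (Real.hasDerivAt_sinh x).div (Real.hasDerivAt_cosh x) (Real.cosh_pos x).ne'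
  have hc : Real.cosh x * Real.cosh x - Real.sinh x * Real.sinh x = 1 := by
    have := Real.cosh_sq x; nlinarith
  rw [hc] at h
  exact h.congr_of_eventuallyEq
    (Filter.Eventually.of_forall fun y => Real.tanh_eq_sinh_div_cosh y)

/-- For `β > 1`, `B ≥ 0` with `cosh²(βB) < β` (strictly below the
critical curve), the stationarity equation
`m = (1/2) * (tanh (β*(m+B)) + tanh (β*(m-B)))`
has a solution `m > 0`; consequently `-m` is also a solution, so there are at least
two nonzero (ferromagnetic) solutions. -/
theorem rfcw_ferromagnetic_solutions_exist (β B : ℝ) (hβ : 1 < β) (hB : 0 ≤ B)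
    (hcrit : Real.cosh (β * B) ^ 2 < β) :
    ∃ m : ℝ, 0 < m ∧
      m = (1 / 2) * (Real.tanh (β * (m + B)) + Real.tanh (β * (m - B))) ∧
      -m = (1 / 2) * (Real.tanh (β * (-m + B)) + Real.tanh (β * (-m - B))) := by
  set h : ℝ → ℝ := fun m => (1 / 2) * (Real.tanh (β * (m + B)) + Real.tanh (β * (m - B))) - m
    with hh
  have hcont : Continuous h := by
    apply Continuous.sub _ continuous_id
    exact continuous_const.mul ((my_continuous_tanh.comp (by continuity)).add
      (my_continuous_tanh.comp (by continuity)))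
  have h0 : h 0 = 0 := by
    simp only [hh]
    rw [show β * (0 - B) = -(β * (0 + B)) by ring, Real.tanh_neg]
    ring
  -- derivative at 0
  have hder : HasDerivAt h (β / Real.cosh (β * B) ^ 2 - 1) 0 := by
    have h1 : HasDerivAt (fun m : ℝ => β * (m + B)) β 0 := by
      simpa using ((hasDerivAt_id (0 : ℝ)).add_const B).const_mul β
    have h2 : HasDerivAt (fun m : ℝ => β * (m - B)) β 0 := by
      simpa using ((hasDerivAt_id (0 : ℝ)).sub_const B).const_mul β
    have t1 : HasDerivAt (fun m : ℝ => Real.tanh (β * (m + B)))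
        (1 / Real.cosh (β * (0 + B)) ^ 2 * β) 0 :=
      by have := (my_hasDerivAt_tanh (β * (0 + B))).comp 0 h1; exact this
    have t2 : HasDerivAt (fun m : ℝ => Real.tanh (β * (m - B)))
        (1 / Real.cosh (β * (0 - B)) ^ 2 * β) 0 :=
      by have := (my_hasDerivAt_tanh (β * (0 - B))).comp 0 h2; exact this
    have hcosh : Real.cosh (β * (0 - B)) = Real.cosh (β * B) := by
      rw [show β * (0 - B) = -(β * B) by ring, Real.cosh_neg]
    have hcosh' : Real.cosh (β * (0 + B)) = Real.cosh (β * B) := by norm_num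
    have := (((t1.add t2).const_mul (1 / 2 : ℝ)).sub (hasDerivAt_id 0))
    rw [hcosh, hcosh'] at this
    exact this.congr_deriv (by ring)
  have hpos : 0 < β / Real.cosh (β * B) ^ 2 - 1 := by
    have hc2 : 0 < Real.cosh (β * B) ^ 2 := by positivity
    rw [sub_pos, lt_div_iff₀ hc2]; linarith
  -- find x ∈ (0,2) with h x > 0
  obtain ⟨x, hx02, hxpos⟩ : ∃ x, x ∈ Set.Ioo (0:ℝ) 2 ∧ 0 < h x := by
    have hslope : Filter.Tendsto (slope h 0) (nhdsWithin 0 {(0:ℝ)}ᶜ)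
        (nhds (β / Real.cosh (β * B) ^ 2 - 1)) := hasDerivAt_iff_tendsto_slope.mp hder
    have hev : ∀ᶠ x in nhdsWithin 0 {(0:ℝ)}ᶜ, 0 < slope h 0 x :=
      hslope.eventually (eventually_gt_nhds hpos)
    have hev2 : ∀ᶠ x in nhdsWithin (0:ℝ) (Set.Ioi 0), 0 < slope h 0 x :=
      hev.filter_mono (nhdsWithin_mono 0 fun x hx => ne_of_gt hx)
    have hev3 : ∀ᶠ x in nhdsWithin (0:ℝ) (Set.Ioi 0), x ∈ Set.Ioo (0:ℝ) 2 :=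
      Filter.eventually_of_mem (Ioo_mem_nhdsGT_of_mem (by norm_num : (0:ℝ) ∈ Set.Ico 0 2)) fun x hx => hx
    obtain ⟨x, hs, hx⟩ := (hev2.and hev3).exists
    refine ⟨x, hx, ?_⟩
    have : slope h 0 x = h x / x := by
      simp [slope_def_field, h0]
    rw [this] at hs
    exact (div_pos_iff.mp hs).resolve_right (fun ⟨_, hx0⟩ => absurd hx.1 (not_lt.mpr hx0.le)) |>.1
  -- h 2 < 0
  have h2neg : h 2 < 0 := by
    have := my_tanh_lt_one (β * (2 + B))
    have := my_tanh_lt_one (β * (2 - B))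
    simp only [hh]
    nlinarith
  -- IVT
  have hsub : Set.Icc (h 2) (h x) ⊆ h '' Set.Icc x 2 :=
    intermediate_value_Icc' hx02.2.le hcont.continuousOn
  obtain ⟨m, hm, hm0⟩ := hsub ⟨h2neg.le, hxpos.le⟩
  have hmpos : 0 < m := lt_of_lt_of_le hx02.1 hm.1
  have heq : m = (1 / 2) * (Real.tanh (β * (m + B)) + Real.tanh (β * (m - B))) := by
    have : h m = 0 := hm0
    simp only [hh] at this
    linarith
  refine ⟨m, hmpos, heq, ?_⟩
  rw [show β * (-m + B) = -(β * (m - B)) by ring, show β * (-m - B) = -(β * (m + B)) by ring,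
    Real.tanh_neg, Real.tanh_neg]
  linarith
end

section
/- Fix β, B ∈ ℝ and set q₀ = tanh(βB). For every integer k ≥ 1: if k is even, then ∂₁^k(G₂⁺ + G₂⁻)(0,q₀) = 0, ∂₁^{k−1}∂₂(G₂⁺ + G₂⁻)(0,q₀) = −2β^{k−1}·sinh(βB), ∂₁^k(G₂⁺ − G₂⁻)(0,q₀) = −2k·β^{k−1}·sinh(βB), and ∂₁^{k−1}∂₂(G₂⁺ − G₂⁻)(0,q₀) = 0; if k is odd, then ∂₁^k(G₂⁺ + G₂⁻)(0,q₀) = 2β^k/cosh(βB) − 2k·β^{k−1}·cosh(βB), ∂₁^{k−1}∂₂(G₂⁺ + G₂⁻)(0,q₀) = 0, ∂₁^k(G₂⁺ − G₂⁻)(0,q₀) = 0, and ∂₁^{k−1}∂₂(G₂⁺ − G₂⁻)(0,q₀) = −2β^{k−1}·cosh(βB). -/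
/-- `G₂^{+}(x,y) = sinh(β(x+B)) − (x+y)·cosh(β(x+B))`. -/
noncomputable def G2p (β B x y : ℝ) : ℝ :=
  Real.sinh (β * (x + B)) - (x + y) * Real.cosh (β * (x + B))

/-- `G₂^{-}(x,y) = sinh(β(x−B)) − (x−y)·cosh(β(x−B))`. -/
noncomputable def G2m (β B x y : ℝ) : ℝ :=
  Real.sinh (β * (x - B)) - (x - y) * Real.cosh (β * (x - B))


open Real

/-- `SC k` is the `k`-th derivative of `sinh`. -/
noncomputable def SC (k : ℕ) (x : ℝ) : ℝ := if Even k then Real.sinh x else Real.cosh x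

lemma SC_even {k : ℕ} (h : Even k) (x : ℝ) : SC k x = Real.sinh x := if_pos h

lemma SC_odd {k : ℕ} (h : ¬ Even k) (x : ℝ) : SC k x = Real.cosh x := if_neg h

lemma SC_hasDerivAt (k : ℕ) (x : ℝ) : HasDerivAt (SC k) (SC (k + 1) x) x := by
  rcases Nat.even_or_odd k with h | h
  · have h1 : ¬ Even (k + 1) := by simp [Nat.even_add_one, h]
    have : SC k = Real.sinh := funext fun y => SC_even h y
    rw [this, SC_odd h1]
    exact Real.hasDerivAt_sinh x
  · have h0 : ¬ Even k := Nat.not_even_iff_odd.mpr h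
    have h1 : Even (k + 1) := by simp [Nat.even_add_one, h0]
    have : SC k = Real.cosh := funext fun y => SC_odd h0 y
    rw [this, SC_even h1]
    exact Real.hasDerivAt_cosh x

lemma SC_affine_hasDerivAt (m : ℕ) (β c x : ℝ) :
    HasDerivAt (fun x => SC m (β * x + c)) (β * SC (m + 1) (β * x + c)) x := by
  have h := (SC_hasDerivAt m (β * x + c)).comp x
    (((hasDerivAt_id x).const_mul β).add_const c)
  simpa [Function.comp_def, mul_comm] using h

lemma contDiff_SC_affine (m : ℕ) (β c : ℝ) {n : ℕ} :
    ContDiff ℝ n (fun x => SC m (β * x + c)) := by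
  rcases Nat.even_or_odd m with h | h
  · simp only [fun y => SC_even h (β * y + c)]
    exact ((contDiff_const.mul contDiff_id).add contDiff_const).sinh
  · simp only [fun y => SC_odd (Nat.not_even_iff_odd.mpr h) (β * y + c)]
    exact ((contDiff_const.mul contDiff_id).add contDiff_const).cosh

lemma iter_SC (β c : ℝ) (m : ℕ) :
    ∀ k : ℕ, iteratedDeriv k (fun x => SC m (β * x + c))
      = fun x => β ^ k * SC (m + k) (β * x + c) := by
  intro k
  induction k with
  | zero => simp
  | succ k ih =>
    rw [iteratedDeriv_succ, ih]
    funext x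
    have h := ((SC_affine_hasDerivAt (m + k) β c x).const_mul (β ^ k)).deriv
    rw [h]
    have : m + k + 1 = m + (k + 1) := by ring
    rw [this, pow_succ]
    ring

/-- iterated derivatives of `x ↦ sinh (βx+c) − (x+q) cosh (βx+c)`. -/
lemma iter_F (β c q : ℝ) :
    ∀ k : ℕ, iteratedDeriv k (fun x => Real.sinh (β * x + c) - (x + q) * Real.cosh (β * x + c))
      = fun x => β ^ k * SC k (β * x + c) - (x + q) * (β ^ k * SC (k + 1) (β * x + c))
          - (k : ℝ) * β ^ (k - 1) * SC k (β * x + c) := by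
  intro k
  induction k with
  | zero =>
    funext x
    simp [SC_even (Even.zero) , SC_odd (by decide : ¬ Even 1)]
  | succ k ih =>
    rw [iteratedDeriv_succ, ih]
    funext x
    have h1 := SC_affine_hasDerivAt k β c x
    have h2 := SC_affine_hasDerivAt (k + 1) β c x
    have hx : HasDerivAt (fun x : ℝ => x + q) 1 x := (hasDerivAt_id x).add_const q
    have H := (((h1.const_mul (β ^ k)).sub (hx.mul (h2.const_mul (β ^ k)))).sub
      (h1.const_mul ((k : ℝ) * β ^ (k - 1)))).deriv
    erw [H]
    have hk : (k : ℝ) * β ^ (k - 1) * β = (k : ℝ) * β ^ k := by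
      cases k with
      | zero => simp
      | succ n => simp [pow_succ]; ring
    have hs : k + 1 - 1 = k := rfl
    rw [hs]
    push_cast
    have hp : β ^ (k + 1) = β ^ k * β := pow_succ β k
    rw [hp]
    linear_combination (-(SC (k + 1) (β * x + c))) * hk

lemma iteratedDeriv_add' {n : ℕ} {f g : ℝ → ℝ} (x : ℝ)
    (hf : ContDiff ℝ n f) (hg : ContDiff ℝ n g) :
    iteratedDeriv n (fun x => f x + g x) x = iteratedDeriv n f x + iteratedDeriv n g x := by
  simp_rw [← iteratedDerivWithin_univ]
  exact iteratedDerivWithin_add (Set.mem_univ x) uniqueDiffOn_univ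
    hf.contDiffWithinAt hg.contDiffWithinAt

lemma iteratedDeriv_sub' {n : ℕ} {f g : ℝ → ℝ} (x : ℝ)
    (hf : ContDiff ℝ n f) (hg : ContDiff ℝ n g) :
    iteratedDeriv n (fun x => f x - g x) x = iteratedDeriv n f x - iteratedDeriv n g x := by
  simp_rw [← iteratedDerivWithin_univ]
  exact iteratedDerivWithin_sub (Set.mem_univ x) uniqueDiffOn_univ
    hf.contDiffWithinAt hg.contDiffWithinAt

lemma contDiff_F (β c q : ℝ) {n : ℕ} :
    ContDiff ℝ n (fun x => Real.sinh (β * x + c) - (x + q) * Real.cosh (β * x + c)) := by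
  have h1 : ContDiff ℝ n (fun x : ℝ => β * x + c) :=
    (contDiff_const.mul contDiff_id).add contDiff_const
  exact h1.sinh.sub ((contDiff_id.add contDiff_const).mul h1.cosh)

/-- Entries of the matrix `D^k 𝒢₂` at the paramagnetic stationary
point `(0, tanh(βB))`, for general `β, B`.  Here `∂₁^k` is `iteratedDeriv k` in the
first variable and `∂₂` is `deriv` in the second variable. -/
theorem DkG2_at_paramagnetic_point (β B : ℝ) :
    ∀ k : ℕ, 1 ≤ k →
      (Even k →
        iteratedDeriv k
            (fun x' => G2p β B x' (Real.tanh (β * B)) + G2m β B x' (Real.tanh (β * B))) 0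
          = 0 ∧
        iteratedDeriv (k - 1)
            (fun x' => deriv (fun y' => G2p β B x' y' + G2m β B x' y') (Real.tanh (β * B))) 0
          = -2 * β ^ (k - 1) * Real.sinh (β * B) ∧
        iteratedDeriv k
            (fun x' => G2p β B x' (Real.tanh (β * B)) - G2m β B x' (Real.tanh (β * B))) 0
          = -2 * (k : ℝ) * β ^ (k - 1) * Real.sinh (β * B) ∧
        iteratedDeriv (k - 1)
            (fun x' => deriv (fun y' => G2p β B x' y' - G2m β B x' y') (Real.tanh (β * B))) 0
          = 0) ∧
      (Odd k →
        iteratedDeriv k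
            (fun x' => G2p β B x' (Real.tanh (β * B)) + G2m β B x' (Real.tanh (β * B))) 0
          = 2 * β ^ k / Real.cosh (β * B) - 2 * (k : ℝ) * β ^ (k - 1) * Real.cosh (β * B) ∧
        iteratedDeriv (k - 1)
            (fun x' => deriv (fun y' => G2p β B x' y' + G2m β B x' y') (Real.tanh (β * B))) 0
          = 0 ∧
        iteratedDeriv k
            (fun x' => G2p β B x' (Real.tanh (β * B)) - G2m β B x' (Real.tanh (β * B))) 0
          = 0 ∧
        iteratedDeriv (k - 1)
            (fun x' => deriv (fun y' => G2p β B x' y' - G2m β B x' y') (Real.tanh (β * B))) 0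
          = -2 * β ^ (k - 1) * Real.cosh (β * B)) := by
  intro k hk
  obtain ⟨m, rfl⟩ : ∃ m, k = m + 1 := ⟨k - 1, (Nat.succ_pred_eq_of_pos hk).symm⟩
  set q := Real.tanh (β * B) with hq
  have hco := (Real.cosh_pos (β * B)).ne'
  -- function rewrites (x-direction)
  have e1 : (fun x' => G2p β B x' q + G2m β B x' q)
      = fun x => (Real.sinh (β * x + β * B) - (x + q) * Real.cosh (β * x + β * B))
          + (Real.sinh (β * x + -(β * B)) - (x + -q) * Real.cosh (β * x + -(β * B))) := by
    funext x; simp only [G2p, G2m]; ring_nf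
  have e1' : (fun x' => G2p β B x' q - G2m β B x' q)
      = fun x => (Real.sinh (β * x + β * B) - (x + q) * Real.cosh (β * x + β * B))
          - (Real.sinh (β * x + -(β * B)) - (x + -q) * Real.cosh (β * x + -(β * B))) := by
    funext x; simp only [G2p, G2m]; ring_nf
  -- inner y-derivatives
  have hd1 : ∀ x : ℝ, HasDerivAt (fun y : ℝ => G2p β B x y)
      (-Real.cosh (β * (x + B))) q := by
    intro x
    have h := ((hasDerivAt_id q).const_add x).mul_const (Real.cosh (β * (x + B)))
    have h' := (hasDerivAt_const q (Real.sinh (β * (x + B)))).sub h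
    simpa [G2p, Pi.sub_def] using h'
  have hd2 : ∀ x : ℝ, HasDerivAt (fun y : ℝ => G2m β B x y)
      (Real.cosh (β * (x - B))) q := by
    intro x
    have h := ((hasDerivAt_id q).const_sub x).mul_const (Real.cosh (β * (x - B)))
    have h' := (hasDerivAt_const q (Real.sinh (β * (x - B)))).sub h
    simpa [G2m, Pi.sub_def] using h'
  have e2 : (fun x' => deriv (fun y' => G2p β B x' y' + G2m β B x' y') q)
      = fun x => -(SC 1 (β * x + β * B)) + SC 1 (β * x + -(β * B)) := by
    funext x
    erw [((hd1 x).add (hd2 x)).deriv, SC_odd (by decide), SC_odd (by decide)]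
    ring_nf
  have e2' : (fun x' => deriv (fun y' => G2p β B x' y' - G2m β B x' y') q)
      = fun x => -(SC 1 (β * x + β * B) + SC 1 (β * x + -(β * B))) := by
    funext x
    erw [((hd1 x).sub (hd2 x)).deriv, SC_odd (by decide), SC_odd (by decide)]
    ring_nf
  -- iterated derivative computations
  have A1 : iteratedDeriv (m + 1) (fun x' => G2p β B x' q + G2m β B x' q) 0
      = (β ^ (m + 1) * SC (m + 1) (β * B) - q * (β ^ (m + 1) * SC (m + 2) (β * B))
          - ((m : ℝ) + 1) * β ^ m * SC (m + 1) (β * B))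
        + (β ^ (m + 1) * SC (m + 1) (-(β * B)) - (-q) * (β ^ (m + 1) * SC (m + 2) (-(β * B)))
          - ((m : ℝ) + 1) * β ^ m * SC (m + 1) (-(β * B))) := by
    rw [e1, iteratedDeriv_add' 0 (contDiff_F β (β * B) q) (contDiff_F β (-(β * B)) (-q)),
      iter_F, iter_F]
    push_cast
    norm_num
  have A1' : iteratedDeriv (m + 1) (fun x' => G2p β B x' q - G2m β B x' q)
      = fun z => iteratedDeriv (m + 1)
          (fun x => Real.sinh (β * x + β * B) - (x + q) * Real.cosh (β * x + β * B)) z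
        - iteratedDeriv (m + 1)
          (fun x => Real.sinh (β * x + -(β * B)) - (x + -q) * Real.cosh (β * x + -(β * B))) z := by
    funext z
    rw [e1']
    exact iteratedDeriv_sub' z (contDiff_F β (β * B) q) (contDiff_F β (-(β * B)) (-q))
  have A2 : iteratedDeriv (m + 1) (fun x' => G2p β B x' q - G2m β B x' q) 0
      = (β ^ (m + 1) * SC (m + 1) (β * B) - q * (β ^ (m + 1) * SC (m + 2) (β * B))
          - ((m : ℝ) + 1) * β ^ m * SC (m + 1) (β * B))
        - (β ^ (m + 1) * SC (m + 1) (-(β * B)) - (-q) * (β ^ (m + 1) * SC (m + 2) (-(β * B)))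
          - ((m : ℝ) + 1) * β ^ m * SC (m + 1) (-(β * B))) := by
    rw [A1', iter_F, iter_F]
    push_cast
    norm_num
  have B1 : iteratedDeriv m (fun x' => deriv (fun y' => G2p β B x' y' + G2m β B x' y') q) 0
      = -(β ^ m * SC (m + 1) (β * B)) + β ^ m * SC (m + 1) (-(β * B)) := by
    rw [e2, iteratedDeriv_add' 0 (contDiff_SC_affine 1 β (β * B)).neg
      (contDiff_SC_affine 1 β (-(β * B))), iteratedDeriv_fun_neg, iter_SC, iter_SC]
    norm_num [add_comm 1 m]
  have B2 : iteratedDeriv m (fun x' => deriv (fun y' => G2p β B x' y' - G2m β B x' y') q) 0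
      = -(β ^ m * SC (m + 1) (β * B) + β ^ m * SC (m + 1) (-(β * B))) := by
    rw [e2', iteratedDeriv_fun_neg]
    rw [iteratedDeriv_add' 0 (contDiff_SC_affine 1 β (β * B))
      (contDiff_SC_affine 1 β (-(β * B))), iter_SC, iter_SC]
    norm_num [add_comm 1 m]
  have hms : m + 1 - 1 = m := rfl
  constructor
  · intro hke
    have hsc1 : ∀ x, SC (m + 1) x = Real.sinh x := fun x => SC_even hke x
    have h2 : ¬ Even (m + 2) := by
      rw [show m + 2 = (m + 1) + 1 from rfl, Nat.even_add_one]
      simpa using hke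
    have hsc2 : ∀ x, SC (m + 2) x = Real.cosh x := fun x => SC_odd h2 x
    refine ⟨?_, ?_, ?_, ?_⟩
    · rw [A1]
      simp only [hsc1, hsc2, Real.sinh_neg, Real.cosh_neg]
      ring
    · rw [hms, B1]
      simp only [hsc1, Real.sinh_neg]
      ring
    · rw [A2, hms]
      simp only [hsc1, hsc2, Real.sinh_neg, Real.cosh_neg, hq,
        Real.tanh_eq_sinh_div_cosh]
      push_cast
      field_simp
      ring
    · rw [hms, B2]
      simp only [hsc1, Real.sinh_neg]
      ring
  · intro hko
    have hne : ¬ Even (m + 1) := Nat.not_even_iff_odd.mpr hko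
    have hsc1 : ∀ x, SC (m + 1) x = Real.cosh x := fun x => SC_odd hne x
    have h2 : Even (m + 2) := by
      rw [show m + 2 = (m + 1) + 1 from rfl, Nat.even_add_one]
      exact hne
    have hsc2 : ∀ x, SC (m + 2) x = Real.sinh x := fun x => SC_even h2 x
    refine ⟨?_, ?_, ?_, ?_⟩
    · rw [A1, hms]
      simp only [hsc1, hsc2, Real.sinh_neg, Real.cosh_neg, hq,
        Real.tanh_eq_sinh_div_cosh]
      push_cast
      field_simp
      linear_combination (2 * β ^ (m + 1)) * Real.cosh_sq_sub_sinh_sq (β * B)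
    · rw [hms, B1]
      simp only [hsc1, Real.cosh_neg]
      ring
    · rw [A2]
      simp only [hsc1, hsc2, Real.sinh_neg, Real.cosh_neg]
      ring
    · rw [hms, B2]
      simp only [hsc1, Real.cosh_neg]
      ring
end

section
/- Fix β, B ∈ ℝ with β = cosh²(βB) and set q₀ = tanh(βB). For every integer k ≥ 1: if k is even, then ∂₁^k(G₂⁺ + G₂⁻)(0,q₀) = 0, ∂₁^{k−1}∂₂(G₂⁺ + G₂⁻)(0,q₀) = −2β^{k−1}·sinh(βB), ∂₁^k(G₂⁺ − G₂⁻)(0,q₀) = −2k·β^{k−1}·sinh(βB), and ∂₁^{k−1}∂₂(G₂⁺ − G₂⁻)(0,q₀) = 0; if k is odd, then ∂₁^k(G₂⁺ + G₂⁻)(0,q₀) = −2(k−1)·β^{k−1}·cosh(βB), ∂₁^{k−1}∂₂(G₂⁺ + G₂⁻)(0,q₀) = 0, ∂₁^k(G₂⁺ − G₂⁻)(0,q₀) = 0, and ∂₁^{k−1}∂₂(G₂⁺ − G₂⁻)(0,q₀) = −2β^{k−1}·cosh(βB). -/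
noncomputable def Fc (β a b : ℝ) : ℝ → ℝ :=
  fun x => a * Real.sinh (β * x) + b * (x * Real.cosh (β * x))

noncomputable def Gc (β a b : ℝ) : ℝ → ℝ :=
  fun x => a * Real.cosh (β * x) + b * (x * Real.sinh (β * x))

lemma hasDerivAt_betamul (β x : ℝ) : HasDerivAt (fun x : ℝ => β * x) β x := by
  simpa using (hasDerivAt_id x).const_mul β

lemma deriv_Fc (β a b : ℝ) : deriv (Fc β a b) = Gc β (a * β + b) (b * β) := by
  funext x
  have h := hasDerivAt_betamul β x
  have h1 : HasDerivAt (Fc β a b) (Gc β (a * β + b) (b * β) x) x := by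
    have := (h.sinh.const_mul a).add (((hasDerivAt_id x).mul h.cosh).const_mul b)
    refine this.congr_deriv ?_
    simp [Gc]; ring
  exact h1.deriv

lemma deriv_Gc (β a b : ℝ) : deriv (Gc β a b) = Fc β (a * β + b) (b * β) := by
  funext x
  have h := hasDerivAt_betamul β x
  have h1 : HasDerivAt (Gc β a b) (Fc β (a * β + b) (b * β) x) x := by
    have := (h.cosh.const_mul a).add (((hasDerivAt_id x).mul h.sinh).const_mul b)
    refine this.congr_deriv ?_
    simp [Fc]; ring
  exact h1.deriv

lemma iter_key (β : ℝ) : ∀ n : ℕ, ∀ a b : ℝ,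
    (iteratedDeriv n (Fc β a b)
      = if Even n then Fc β (a * β ^ n + n * b * β ^ (n - 1)) (b * β ^ n)
        else Gc β (a * β ^ n + n * b * β ^ (n - 1)) (b * β ^ n)) ∧
    (iteratedDeriv n (Gc β a b)
      = if Even n then Gc β (a * β ^ n + n * b * β ^ (n - 1)) (b * β ^ n)
        else Fc β (a * β ^ n + n * b * β ^ (n - 1)) (b * β ^ n)) := by
  intro n
  induction n with
  | zero => intro a b; norm_num
  | succ m ih =>
    intro a b
    have hA : (a * β + b) * β ^ m + (m : ℝ) * (b * β) * β ^ (m - 1)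
        = a * β ^ (m + 1) + ((m : ℝ) + 1) * b * β ^ m := by
      cases m with
      | zero => norm_num
      | succ l => push_cast; ring
    have hB : (b * β) * β ^ m = b * β ^ (m + 1) := by ring
    have hcast : ((m + 1 : ℕ) : ℝ) = (m : ℝ) + 1 := by push_cast; ring
    constructor
    · rw [iteratedDeriv_succ', deriv_Fc, (ih (a * β + b) (b * β)).2,
        Nat.add_sub_cancel, hcast, hA, hB]
      rcases Nat.even_or_odd m with he | ho
      · rw [if_pos he, if_neg (by simp [Nat.even_add_one, he])]
      · rw [if_neg (Nat.not_even_iff_odd.2 ho), if_pos (Nat.even_add_one.2 (Nat.not_even_iff_odd.2 ho))]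
    · rw [iteratedDeriv_succ', deriv_Gc, (ih (a * β + b) (b * β)).1,
        Nat.add_sub_cancel, hcast, hA, hB]
      rcases Nat.even_or_odd m with he | ho
      · rw [if_pos he, if_neg (by simp [Nat.even_add_one, he])]
      · rw [if_neg (Nat.not_even_iff_odd.2 ho), if_pos (Nat.even_add_one.2 (Nat.not_even_iff_odd.2 ho))]

lemma Fc_zero (β a b : ℝ) : Fc β a b 0 = 0 := by simp [Fc]
lemma Gc_zero (β a b : ℝ) : Gc β a b 0 = a := by simp [Gc]

/-- Entries of the matrix `D^k 𝒢₂` at the paramagnetic stationary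
point `(0, tanh(βB))` on the critical curve `β = cosh²(βB)`. -/
theorem DkG2_at_paramagnetic_point_critical (β B : ℝ)
    (hcrit : β = Real.cosh (β * B) ^ 2) :
    ∀ k : ℕ, 1 ≤ k →
      (Even k →
        iteratedDeriv k
            (fun x' => G2p β B x' (Real.tanh (β * B)) + G2m β B x' (Real.tanh (β * B))) 0
          = 0 ∧
        iteratedDeriv (k - 1)
            (fun x' => deriv (fun y' => G2p β B x' y' + G2m β B x' y') (Real.tanh (β * B))) 0
          = -2 * β ^ (k - 1) * Real.sinh (β * B) ∧
        iteratedDeriv k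
            (fun x' => G2p β B x' (Real.tanh (β * B)) - G2m β B x' (Real.tanh (β * B))) 0
          = -2 * (k : ℝ) * β ^ (k - 1) * Real.sinh (β * B) ∧
        iteratedDeriv (k - 1)
            (fun x' => deriv (fun y' => G2p β B x' y' - G2m β B x' y') (Real.tanh (β * B))) 0
          = 0) ∧
      (Odd k →
        iteratedDeriv k
            (fun x' => G2p β B x' (Real.tanh (β * B)) + G2m β B x' (Real.tanh (β * B))) 0
          = -2 * ((k : ℝ) - 1) * β ^ (k - 1) * Real.cosh (β * B) ∧
        iteratedDeriv (k - 1)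
            (fun x' => deriv (fun y' => G2p β B x' y' + G2m β B x' y') (Real.tanh (β * B))) 0
          = 0 ∧
        iteratedDeriv k
            (fun x' => G2p β B x' (Real.tanh (β * B)) - G2m β B x' (Real.tanh (β * B))) 0
          = 0 ∧
        iteratedDeriv (k - 1)
            (fun x' => deriv (fun y' => G2p β B x' y' - G2m β B x' y') (Real.tanh (β * B))) 0
          = -2 * β ^ (k - 1) * Real.cosh (β * B)) := by
  have hc0 : Real.cosh (β * B) ≠ 0 := ne_of_gt (Real.cosh_pos _)
  have hq : Real.tanh (β * B) = Real.sinh (β * B) / Real.cosh (β * B) :=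
    Real.tanh_eq_sinh_div_cosh _
  have hsc : Real.cosh (β * B) ^ 2 - Real.sinh (β * B) ^ 2 = 1 :=
    Real.cosh_sq_sub_sinh_sq _
  -- the four reductions
  have eq1 : (fun x' => G2p β B x' (Real.tanh (β * B)) + G2m β B x' (Real.tanh (β * B)))
      = Fc β (2 / Real.cosh (β * B)) (-(2 * Real.cosh (β * B))) := by
    funext x
    simp only [G2p, G2m, Fc, hq, mul_add, mul_sub, Real.sinh_add, Real.cosh_add,
      Real.sinh_sub, Real.cosh_sub]
    field_simp
    linear_combination (2 * Real.sinh (β * x)) * hsc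
  have eq3 : (fun x' => G2p β B x' (Real.tanh (β * B)) - G2m β B x' (Real.tanh (β * B)))
      = Gc β 0 (-(2 * Real.sinh (β * B))) := by
    funext x
    simp only [G2p, G2m, Gc, hq, mul_add, mul_sub, Real.sinh_add, Real.cosh_add,
      Real.sinh_sub, Real.cosh_sub]
    field_simp
    ring
  have hd2 : ∀ x : ℝ, deriv (fun y' => G2p β B x y' + G2m β B x y') (Real.tanh (β * B))
      = -Real.cosh (β * (x + B)) + Real.cosh (β * (x - B)) := by
    intro x
    have h1 : HasDerivAt (fun y' => G2p β B x y' + G2m β B x y')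
        (-Real.cosh (β * (x + B)) + Real.cosh (β * (x - B))) (Real.tanh (β * B)) := by
      have ha : HasDerivAt (fun y' : ℝ => G2p β B x y') (-Real.cosh (β * (x + B)))
          (Real.tanh (β * B)) := by
        have := (((hasDerivAt_id (Real.tanh (β * B))).const_add x).mul_const
          (Real.cosh (β * (x + B)))).const_sub (Real.sinh (β * (x + B)))
        simpa [G2p] using this
      have hb : HasDerivAt (fun y' : ℝ => G2m β B x y') (Real.cosh (β * (x - B)))
          (Real.tanh (β * B)) := by
        have := (((hasDerivAt_id (Real.tanh (β * B))).const_sub x).mul_const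
          (Real.cosh (β * (x - B)))).const_sub (Real.sinh (β * (x - B)))
        simpa [G2m] using this
      exact ha.add hb
    exact h1.deriv
  have hd4 : ∀ x : ℝ, deriv (fun y' => G2p β B x y' - G2m β B x y') (Real.tanh (β * B))
      = -Real.cosh (β * (x + B)) - Real.cosh (β * (x - B)) := by
    intro x
    have h1 : HasDerivAt (fun y' => G2p β B x y' - G2m β B x y')
        (-Real.cosh (β * (x + B)) - Real.cosh (β * (x - B))) (Real.tanh (β * B)) := by
      have ha : HasDerivAt (fun y' : ℝ => G2p β B x y') (-Real.cosh (β * (x + B)))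
          (Real.tanh (β * B)) := by
        have := (((hasDerivAt_id (Real.tanh (β * B))).const_add x).mul_const
          (Real.cosh (β * (x + B)))).const_sub (Real.sinh (β * (x + B)))
        simpa [G2p] using this
      have hb : HasDerivAt (fun y' : ℝ => G2m β B x y') (Real.cosh (β * (x - B)))
          (Real.tanh (β * B)) := by
        have := (((hasDerivAt_id (Real.tanh (β * B))).const_sub x).mul_const
          (Real.cosh (β * (x - B)))).const_sub (Real.sinh (β * (x - B)))
        simpa [G2m] using this
      exact ha.sub hb
    exact h1.deriv
  have eq2 : (fun x' => deriv (fun y' => G2p β B x' y' + G2m β B x' y') (Real.tanh (β * B)))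
      = Fc β (-(2 * Real.sinh (β * B))) 0 := by
    funext x
    rw [hd2 x]
    simp only [Fc, mul_add, mul_sub, Real.cosh_add, Real.cosh_sub]
    ring
  have eq4 : (fun x' => deriv (fun y' => G2p β B x' y' - G2m β B x' y') (Real.tanh (β * B)))
      = Gc β (-(2 * Real.cosh (β * B))) 0 := by
    funext x
    rw [hd4 x]
    simp only [Gc, mul_add, mul_sub, Real.cosh_add, Real.cosh_sub]
    ring
  intro k hk
  obtain ⟨m, rfl⟩ : ∃ m, k = m + 1 := ⟨k - 1, (Nat.succ_pred_eq_of_pos hk).symm⟩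
  simp only [Nat.add_sub_cancel]
  constructor
  · intro hke
    have hmo : Odd m := Nat.not_even_iff_odd.1 (Nat.even_add_one.1 hke)
    have hmne : ¬ Even m := Nat.not_even_iff_odd.2 hmo
    refine ⟨?_, ?_, ?_, ?_⟩
    · rw [eq1, (iter_key β (m+1) _ _).1, if_pos hke, Fc_zero]
    · rw [eq2, (iter_key β m _ _).1, if_neg hmne, Gc_zero]
      ring
    · rw [eq3, (iter_key β (m+1) _ _).2, if_pos hke, Gc_zero, Nat.add_sub_cancel]
      push_cast; ring
    · rw [eq4, (iter_key β m _ _).2, if_neg hmne, Fc_zero]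
  · intro hko
    have hme : Even m := by
      have h := Nat.not_even_iff_odd.2 hko
      rw [Nat.even_add_one, not_not] at h
      exact h
    have hkne : ¬ Even (m + 1) := by simp [Nat.even_add_one, hme]
    refine ⟨?_, ?_, ?_, ?_⟩
    · rw [eq1, (iter_key β (m+1) _ _).1, if_neg hkne, Gc_zero, Nat.add_sub_cancel]
      push_cast
      field_simp
      linear_combination (β ^ m) * hcrit
    · rw [eq2, (iter_key β m _ _).1, if_pos hme, Fc_zero]
    · rw [eq3, (iter_key β (m+1) _ _).2, if_neg hkne, Fc_zero]
    · rw [eq4, (iter_key β m _ _).2, if_pos hme, Gc_zero]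
      ring
end

section
/- Let 1 < β ≤ 3/2 and B > 0 satisfy β = cosh²(βB). Then for all x, y ∈ ℝ, all b > 0 and all ν ∈ ℝ: −5β⁴·cosh(βB)·b^{ν−4}·x⁴y² − 60β²·cosh(βB)·b^{ν−2}·x²y² − 120·cosh(βB)·b^{ν}·y² − 40β³·sinh(βB)·b^{ν−3}·x⁴y − 240β·sinh(βB)·b^{ν−1}·x²y − 4β⁴·cosh(βB)·b^{ν−4}·x⁶ − 40β²·cosh(βB)·b^{ν−2}·x⁴ ≤ 0, where b^{s} denotes the real power of the positive real b. -/
private lemma key_disc (s c w Bv : ℝ) (hw : 0 ≤ w) (hB : 0 ≤ Bv)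
    (h3 : 3 * s ^ 2 ≤ c ^ 2) :
    1600 * s ^ 2 * Bv * (w + 6 * Bv) ^ 2
      ≤ 16 * c ^ 2 * (5 * w ^ 2 + 60 * w * Bv + 120 * Bv ^ 2) * (w + 10 * Bv) := by
  nlinarith [mul_nonneg (mul_nonneg hB (sq_nonneg (w + 6 * Bv))) (sub_nonneg.2 h3),
    mul_nonneg (sq_nonneg c) (mul_nonneg hw (mul_nonneg hw hw)),
    mul_nonneg (sq_nonneg c) (mul_nonneg (mul_nonneg hw hw) hB),
    mul_nonneg (sq_nonneg c) (mul_nonneg hw (mul_nonneg hB hB))]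

private lemma expr_nonneg (β c s b x y : ℝ) (hb : 0 < b) (hc : 0 < c)
    (h3 : 3 * s ^ 2 ≤ c ^ 2) :
    0 ≤ 5 * β ^ 4 * c * x ^ 4 * y ^ 2 + 60 * β ^ 2 * c * b ^ 2 * x ^ 2 * y ^ 2
      + 120 * c * b ^ 4 * y ^ 2 + 40 * β ^ 3 * s * b * x ^ 4 * y
      + 240 * β * s * b ^ 3 * x ^ 2 * y + 4 * β ^ 4 * c * x ^ 6
      + 40 * β ^ 2 * c * b ^ 2 * x ^ 4 := by
  have hA : 0 < c * (5 * β ^ 4 * x ^ 4 + 60 * β ^ 2 * x ^ 2 * b ^ 2 + 120 * b ^ 4) := by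
    apply mul_pos hc; positivity
  have hdisc : (40 * β ^ 3 * s * b * x ^ 4 + 240 * β * s * b ^ 3 * x ^ 2) ^ 2
      ≤ 4 * (c * (5 * β ^ 4 * x ^ 4 + 60 * β ^ 2 * x ^ 2 * b ^ 2 + 120 * b ^ 4))
        * (4 * β ^ 4 * c * x ^ 6 + 40 * β ^ 2 * c * b ^ 2 * x ^ 4) := by
    have hk := key_disc s c (β ^ 2 * x ^ 2) (b ^ 2)
      (by positivity) (by positivity) h3
    have hx : (0:ℝ) ≤ β ^ 2 * x ^ 4 := by positivity
    nlinarith [mul_le_mul_of_nonneg_left hk hx]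
  have h4 : 0 ≤ (4 * (c * (5 * β ^ 4 * x ^ 4 + 60 * β ^ 2 * x ^ 2 * b ^ 2 + 120 * b ^ 4)))
      * (5 * β ^ 4 * c * x ^ 4 * y ^ 2 + 60 * β ^ 2 * c * b ^ 2 * x ^ 2 * y ^ 2
        + 120 * c * b ^ 4 * y ^ 2 + 40 * β ^ 3 * s * b * x ^ 4 * y
        + 240 * β * s * b ^ 3 * x ^ 2 * y + 4 * β ^ 4 * c * x ^ 6
        + 40 * β ^ 2 * c * b ^ 2 * x ^ 4) := by
    nlinarith [sq_nonneg (2 * (c * (5 * β ^ 4 * x ^ 4 + 60 * β ^ 2 * x ^ 2 * b ^ 2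
      + 120 * b ^ 4)) * y + (40 * β ^ 3 * s * b * x ^ 4 + 240 * β * s * b ^ 3 * x ^ 2)),
      hdisc]
  have hA4 : 0 < 4 * (c * (5 * β ^ 4 * x ^ 4 + 60 * β ^ 2 * x ^ 2 * b ^ 2 + 120 * b ^ 4)) := by
    linarith
  exact nonneg_of_mul_nonneg_right h4 hA4

/-- Non-positivity of the quantity `Ξ_n(x,y)` arising in the
upper bound for the approximating Hamiltonians at criticality: for `1 < β ≤ 3/2`,
`B > 0` on the critical curve `β = cosh²(βB)`, all `x, y ∈ ℝ`, `b > 0`, `ν ∈ ℝ`. -/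
theorem Xi_nonpositive (β B : ℝ) (hβ1 : 1 < β) (hβ2 : β ≤ 3 / 2) (hB : 0 < B)
    (hcrit : β = Real.cosh (β * B) ^ 2) :
    ∀ (x y b ν : ℝ), 0 < b →
      -5 * β ^ 4 * Real.cosh (β * B) * b ^ (ν - 4) * x ^ 4 * y ^ 2
        - 60 * β ^ 2 * Real.cosh (β * B) * b ^ (ν - 2) * x ^ 2 * y ^ 2
        - 120 * Real.cosh (β * B) * b ^ ν * y ^ 2
        - 40 * β ^ 3 * Real.sinh (β * B) * b ^ (ν - 3) * x ^ 4 * y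
        - 240 * β * Real.sinh (β * B) * b ^ (ν - 1) * x ^ 2 * y
        - 4 * β ^ 4 * Real.cosh (β * B) * b ^ (ν - 4) * x ^ 6
        - 40 * β ^ 2 * Real.cosh (β * B) * b ^ (ν - 2) * x ^ 4 ≤ 0 := by
  intro x y b ν hb
  set c : ℝ := Real.cosh (β * B) with hc_def
  set s : ℝ := Real.sinh (β * B) with hs_def
  have hc : 0 < c := Real.cosh_pos (x := β * B)
  have hs2 : s ^ 2 = c ^ 2 - 1 := by
    rw [hs_def, hc_def, Real.sinh_sq]
  have h3 : 3 * s ^ 2 ≤ c ^ 2 := by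
    rw [hs2]
    have : c ^ 2 ≤ 3 / 2 := hcrit ▸ hβ2
    linarith
  have e1 : b ^ (ν - 3) = b ^ (ν - 4) * b := by
    rw [show ν - 3 = (ν - 4) + 1 by ring, Real.rpow_add hb, Real.rpow_one]
  have e2 : b ^ (ν - 2) = b ^ (ν - 4) * b ^ 2 := by
    rw [show ν - 2 = (ν - 4) + 2 by ring, Real.rpow_add hb,
      show (2:ℝ) = ((2:ℕ):ℝ) by norm_num, Real.rpow_natCast]
  have e3 : b ^ (ν - 1) = b ^ (ν - 4) * b ^ 3 := by
    rw [show ν - 1 = (ν - 4) + 3 by ring, Real.rpow_add hb,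
      show (3:ℝ) = ((3:ℕ):ℝ) by norm_num, Real.rpow_natCast]
  have e4 : b ^ ν = b ^ (ν - 4) * b ^ 4 := by
    rw [← Real.rpow_natCast b 4, ← Real.rpow_add hb]
    norm_num
  rw [e1, e2, e3, e4]
  have hP : 0 < b ^ (ν - 4) := Real.rpow_pos_of_pos hb _
  have hE := expr_nonneg β c s b x y hb hc h3
  nlinarith [mul_nonneg hP.le hE]
end
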